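/- arXiv:math/0410033 — 3 statements merged into one kernel-verified Lean document; each statement's English description precedes it below -/
import Mathlib

section
/- Let h(t) = Σ_λ a_λ e^{λt} where λ ranges over a finite symmetric set of reals, a_λ = a_{-λ} > 0, a₀ ≥ 1, Σ a_λ = 2, and at least one pair ±λ ≠ 0 occurs. Then for all t ∈ ℝ: h'(t)² + 2h''(t) + 2h''(0) ≥ h''(0)·h(t)². -/
open Real Finset

lemma cheb_aux (s : Finset ℝ) (w f g : ℝ → ℝ) (hw : ∀ i ∈ s, 0 ≤ w i)
    (hfg : ∀ i ∈ s, ∀ j ∈ s, 0 ≤ (f i - f j) * (g i - g j)) :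
    (∑ i ∈ s, w i * f i) * (∑ i ∈ s, w i * g i) ≤
      (∑ i ∈ s, w i) * (∑ i ∈ s, w i * (f i * g i)) := by
  have h0 : 0 ≤ ∑ i ∈ s, ∑ j ∈ s, w i * w j * ((f i - f j) * (g i - g j)) :=
    Finset.sum_nonneg fun i hi => Finset.sum_nonneg fun j hj =>
      mul_nonneg (mul_nonneg (hw i hi) (hw j hj)) (hfg i hi j hj)
  have expand : ∑ i ∈ s, ∑ j ∈ s, w i * w j * ((f i - f j) * (g i - g j))
      = 2 * ((∑ i ∈ s, w i) * (∑ i ∈ s, w i * (f i * g i)))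
        - 2 * ((∑ i ∈ s, w i * f i) * (∑ i ∈ s, w i * g i)) := by
    have h1 : ∀ i ∈ s, ∀ j ∈ s, w i * w j * ((f i - f j) * (g i - g j))
        = w i * (w j * (f j * g j)) + (w i * (f i * g i)) * w j
          - (w i * f i) * (w j * g j) - (w i * g i) * (w j * f j) := by
      intros; ring
    calc ∑ i ∈ s, ∑ j ∈ s, w i * w j * ((f i - f j) * (g i - g j))
        = ∑ i ∈ s, ∑ j ∈ s, (w i * (w j * (f j * g j)) + (w i * (f i * g i)) * w j
          - (w i * f i) * (w j * g j) - (w i * g i) * (w j * f j)) :=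
          Finset.sum_congr rfl fun i hi => Finset.sum_congr rfl fun j hj => h1 i hi j hj
      _ = (∑ i ∈ s, w i) * (∑ j ∈ s, w j * (f j * g j))
          + (∑ i ∈ s, w i * (f i * g i)) * (∑ j ∈ s, w j)
          - (∑ i ∈ s, w i * f i) * (∑ j ∈ s, w j * g j)
          - (∑ i ∈ s, w i * g i) * (∑ j ∈ s, w j * f j) := by
          simp only [Finset.sum_sub_distrib, Finset.sum_add_distrib, ← Finset.mul_sum,
            ← Finset.sum_mul]
      _ = _ := by ring
  linarith

lemma abs_le_abs_of_sq (x y : ℝ) (h : x * x ≤ y * y) : |x| ≤ |y| := by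
  nlinarith [abs_nonneg x, abs_nonneg y, abs_mul_abs_self x, abs_mul_abs_self y]

lemma cosh_pair_nonneg (t x y : ℝ) :
    0 ≤ (x * x - y * y) * (Real.cosh (x * t) - Real.cosh (y * t)) := by
  rcases le_total (x * x) (y * y) with hxy | hxy
  · have habs : |x * t| ≤ |y * t| := by
      rw [abs_mul, abs_mul]
      exact mul_le_mul_of_nonneg_right (abs_le_abs_of_sq x y hxy) (abs_nonneg t)
    have hc : Real.cosh (x * t) ≤ Real.cosh (y * t) := Real.cosh_le_cosh.2 habs
    have h2 := mul_nonneg (sub_nonneg.2 hxy) (sub_nonneg.2 hc)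
    nlinarith [h2]
  · have habs : |y * t| ≤ |x * t| := by
      rw [abs_mul, abs_mul]
      exact mul_le_mul_of_nonneg_right (abs_le_abs_of_sq y x hxy) (abs_nonneg t)
    have hc : Real.cosh (y * t) ≤ Real.cosh (x * t) := Real.cosh_le_cosh.2 habs
    exact mul_nonneg (by linarith) (by linarith)

/-- Let `h(t) = Σ_λ a_λ e^{λt}` where λ ranges over a finite
symmetric set of reals containing 0, `a λ = a (-λ) > 0`, `a 0 ≥ 1`,
`Σ a λ = 2`, and at least one pair `±λ ≠ 0` occurs.  Then for all `t ∈ ℝ`: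
`h'(t)² + 2h''(t) + 2h''(0) ≥ h''(0)·h(t)²`. -/
theorem exponential_sum_moment_inequality
    (Λ : Finset ℝ) (hΛsymm : ∀ l ∈ Λ, -l ∈ Λ) (h0 : (0 : ℝ) ∈ Λ)
    (a : ℝ → ℝ) (hapos : ∀ l ∈ Λ, 0 < a l)
    (hasymm : ∀ l ∈ Λ, a (-l) = a l)
    (ha0 : 1 ≤ a 0) (hsum : ∑ l ∈ Λ, a l = 2)
    (hne : ∃ l ∈ Λ, l ≠ 0)
    (h : ℝ → ℝ) (hdef : ∀ t, h t = ∑ l ∈ Λ, a l * Real.exp (l * t)) :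
    ∀ t : ℝ,
      (deriv h t) ^ 2 + 2 * deriv (deriv h) t +
          2 * deriv (deriv h) 0 ≥ deriv (deriv h) 0 * (h t) ^ 2 := by
  have hH : h = fun t => ∑ l ∈ Λ, a l * Real.exp (l * t) := funext hdef
  subst hH
  -- generic derivative of exponential sums
  have key : ∀ (c : ℝ → ℝ) (t : ℝ),
      HasDerivAt (fun t => ∑ l ∈ Λ, c l * Real.exp (l * t))
        (∑ l ∈ Λ, (c l * l) * Real.exp (l * t)) t := by
    intro c t
    refine HasDerivAt.fun_sum fun l _ => ?_
    have h1 : HasDerivAt (fun y : ℝ => l * y) l t := by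
      simpa using (hasDerivAt_id t).const_mul l
    have h2 := h1.exp.const_mul (c l)
    exact h2.congr_deriv (by ring)
  have ed1 : deriv (fun t => ∑ l ∈ Λ, a l * Real.exp (l * t))
      = fun t => ∑ l ∈ Λ, (a l * l) * Real.exp (l * t) :=
    funext fun t => (key a t).deriv
  have ed2 : deriv (deriv (fun t => ∑ l ∈ Λ, a l * Real.exp (l * t)))
      = fun t => ∑ l ∈ Λ, ((a l * l) * l) * Real.exp (l * t) := by
    rw [ed1]
    exact funext fun t => (key (fun l => a l * l) t).deriv
  intro t
  rw [ed2, ed1]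
  simp only [ge_iff_le]
  -- reindexing under λ ↦ -λ
  have reidx : ∀ g : ℝ → ℝ, ∑ l ∈ Λ, g l = ∑ l ∈ Λ, g (-l) := by
    intro g
    have himg : Λ.image (fun l => -l) = Λ := by
      apply Finset.Subset.antisymm
      · intro x hx
        obtain ⟨m, hm, rfl⟩ := Finset.mem_image.1 hx
        exact hΛsymm m hm
      · intro x hx
        exact Finset.mem_image.2 ⟨-x, hΛsymm x hx, neg_neg x⟩
    conv_lhs => rw [← himg]
    exact Finset.sum_image fun x _ y _ h => neg_injective h
  -- hyperbolic representations
  have hrepH : ∀ u : ℝ, (∑ l ∈ Λ, a l * Real.exp (l * u))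
      = ∑ l ∈ Λ, a l * Real.cosh (l * u) := by
    intro u
    have h1 := reidx (fun l => a l * Real.exp (l * u))
    have h2 : ∑ l ∈ Λ, a (-l) * Real.exp (-l * u)
        = ∑ l ∈ Λ, a l * Real.exp (-(l * u)) :=
      Finset.sum_congr rfl fun l hl => by rw [hasymm l hl, neg_mul]
    rw [h2] at h1
    have h3 : ∑ l ∈ Λ, a l * Real.cosh (l * u)
        = ∑ l ∈ Λ, (a l * Real.exp (l * u) + a l * Real.exp (-(l * u))) / 2 :=
      Finset.sum_congr rfl fun l _ => by rw [Real.cosh_eq]; ring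
    rw [h3, ← Finset.sum_div, Finset.sum_add_distrib, ← h1]
    ring
  have hrepS1 : ∀ u : ℝ, (∑ l ∈ Λ, a l * l * Real.exp (l * u))
      = ∑ l ∈ Λ, a l * l * Real.sinh (l * u) := by
    intro u
    have h1 := reidx (fun l => a l * l * Real.exp (l * u))
    have h2 : ∑ l ∈ Λ, a (-l) * -l * Real.exp (-l * u)
        = -∑ l ∈ Λ, a l * l * Real.exp (-(l * u)) := by
      rw [← Finset.sum_neg_distrib]
      refine Finset.sum_congr rfl fun l hl => ?_
      rw [hasymm l hl, show -l * u = -(l * u) by ring]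
      ring
    rw [h2] at h1
    have h3 : ∑ l ∈ Λ, a l * l * Real.sinh (l * u)
        = ∑ l ∈ Λ, (a l * l * Real.exp (l * u) - a l * l * Real.exp (-(l * u))) / 2 :=
      Finset.sum_congr rfl fun l _ => by rw [Real.sinh_eq]; ring
    rw [h3, ← Finset.sum_div, Finset.sum_sub_distrib]
    have h4 : ∑ l ∈ Λ, a l * l * Real.exp (-(l * u))
        = -∑ l ∈ Λ, a l * l * Real.exp (l * u) := by linarith [h1]
    rw [h4]
    ring
  have hrepS2 : ∀ u : ℝ, (∑ l ∈ Λ, a l * l * l * Real.exp (l * u))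
      = ∑ l ∈ Λ, a l * l * l * Real.cosh (l * u) := by
    intro u
    have h1 := reidx (fun l => a l * l * l * Real.exp (l * u))
    have h2 : ∑ l ∈ Λ, a (-l) * -l * -l * Real.exp (-l * u)
        = ∑ l ∈ Λ, a l * l * l * Real.exp (-(l * u)) := by
      refine Finset.sum_congr rfl fun l hl => ?_
      rw [hasymm l hl, show -l * u = -(l * u) by ring]
      ring
    rw [h2] at h1
    have h3 : ∑ l ∈ Λ, a l * l * l * Real.cosh (l * u)
        = ∑ l ∈ Λ, (a l * l * l * Real.exp (l * u) + a l * l * l * Real.exp (-(l * u))) / 2 :=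
      Finset.sum_congr rfl fun l _ => by rw [Real.cosh_eq]; ring
    rw [h3, ← Finset.sum_div, Finset.sum_add_distrib, ← h1]
    ring
  -- the second moment M
  set M : ℝ := ∑ l ∈ Λ, a l * l * l with hM
  have hS20 : (∑ l ∈ Λ, a l * l * l * Real.exp (l * 0)) = M := by
    simp [hM]
  have hMnonneg : 0 ≤ M := by
    rw [hM]
    refine Finset.sum_nonneg fun l hl => ?_
    have : a l * l * l = a l * (l * l) := by ring
    rw [this]
    exact mul_nonneg (hapos l hl).le (mul_self_nonneg l)
  -- key Chebyshev bound : G(u) = h''(u) - M h(u) + M ≥ 0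
  have hG : ∀ u : ℝ, M * (∑ l ∈ Λ, a l * Real.exp (l * u))
      ≤ (∑ l ∈ Λ, a l * l * l * Real.exp (l * u)) + M := by
    intro u
    rw [hrepH u, hrepS2 u]
    have haQ : a 0 + ∑ l ∈ Λ.erase 0, a l = 2 := by
      rw [Finset.add_sum_erase Λ a h0]; exact hsum
    have hQ1 : ∑ l ∈ Λ.erase 0, a l ≤ 1 := by linarith
    have hM' : M = ∑ l ∈ Λ.erase 0, a l * l * l := by
      rw [hM, ← Finset.add_sum_erase Λ (fun l => a l * l * l) h0]
      simp
    have hD' : ∑ l ∈ Λ, a l * l * l * Real.cosh (l * u)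
        = ∑ l ∈ Λ.erase 0, a l * l * l * Real.cosh (l * u) := by
      rw [← Finset.add_sum_erase Λ (fun l => a l * l * l * Real.cosh (l * u)) h0]
      simp
    have hC' : ∑ l ∈ Λ, a l * Real.cosh (l * u)
        = a 0 + ∑ l ∈ Λ.erase 0, a l * Real.cosh (l * u) := by
      rw [← Finset.add_sum_erase Λ _ h0, zero_mul, Real.cosh_zero, mul_one]
    have cheb := cheb_aux (Λ.erase 0) a (fun l => l * l) (fun l => Real.cosh (l * u))
      (fun l hl => (hapos l (Finset.mem_of_mem_erase hl)).le)
      (fun l _ m _ => cosh_pair_nonneg u l m)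
    have e1 : ∑ l ∈ Λ.erase 0, a l * (l * l) = ∑ l ∈ Λ.erase 0, a l * l * l :=
      Finset.sum_congr rfl fun l _ => by ring
    have e2 : ∑ l ∈ Λ.erase 0, a l * (l * l * Real.cosh (l * u))
        = ∑ l ∈ Λ.erase 0, a l * l * l * Real.cosh (l * u) :=
      Finset.sum_congr rfl fun l _ => by ring
    rw [e1, e2] at cheb
    have hPgeM : ∑ l ∈ Λ.erase 0, a l * l * l
        ≤ ∑ l ∈ Λ.erase 0, a l * l * l * Real.cosh (l * u) := by
      refine Finset.sum_le_sum fun l hl => ?_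
      have hnn : 0 ≤ a l * l * l := by
        have : a l * l * l = a l * (l * l) := by ring
        rw [this]
        exact mul_nonneg (hapos l (Finset.mem_of_mem_erase hl)).le (mul_self_nonneg l)
      exact le_mul_of_one_le_right hnn (Real.one_le_cosh _)
    rw [hD', hC', hM']
    have hM'nonneg : 0 ≤ ∑ l ∈ Λ.erase 0, a l * l * l := hM' ▸ hMnonneg
    nlinarith [cheb, hQ1, hPgeM, hM'nonneg, haQ]
  -- sign of h'
  have hS1nonneg : ∀ u : ℝ, 0 ≤ u → 0 ≤ ∑ l ∈ Λ, a l * l * Real.exp (l * u) := by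
    intro u hu
    rw [hrepS1 u]
    refine Finset.sum_nonneg fun l hl => ?_
    have : a l * l * Real.sinh (l * u) = a l * (l * Real.sinh (l * u)) := by ring
    rw [this]
    refine mul_nonneg (hapos l hl).le ?_
    rcases le_total 0 l with hl0 | hl0
    · exact mul_nonneg hl0 (Real.sinh_nonneg_iff.2 (mul_nonneg hl0 hu))
    · have hsin : Real.sinh (l * u) ≤ 0 := Real.sinh_nonpos_iff.2 (mul_nonpos_of_nonpos_of_nonneg hl0 hu)
      nlinarith
  have hS1nonpos : ∀ u : ℝ, u ≤ 0 → (∑ l ∈ Λ, a l * l * Real.exp (l * u)) ≤ 0 := by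
    intro u hu
    rw [hrepS1 u]
    refine Finset.sum_nonpos fun l hl => ?_
    have : a l * l * Real.sinh (l * u) = a l * (l * Real.sinh (l * u)) := by ring
    rw [this]
    refine mul_nonpos_of_nonneg_of_nonpos (hapos l hl).le ?_
    rcases le_total 0 l with hl0 | hl0
    · have hsin : Real.sinh (l * u) ≤ 0 := Real.sinh_nonpos_iff.2 (mul_nonpos_of_nonneg_of_nonpos hl0 hu)
      exact mul_nonpos_of_nonneg_of_nonpos hl0 hsin
    · have hsin : 0 ≤ Real.sinh (l * u) := Real.sinh_nonneg_iff.2 (by nlinarith)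
      exact mul_nonpos_of_nonpos_of_nonneg hl0 hsin
  -- the function F and its derivative
  have hFd : ∀ u : ℝ, HasDerivAt
      (fun u => (∑ l ∈ Λ, a l * l * Real.exp (l * u)) ^ 2
        - M * (((∑ l ∈ Λ, a l * Real.exp (l * u)) - 2) * (∑ l ∈ Λ, a l * Real.exp (l * u))))
      (2 * (∑ l ∈ Λ, a l * l * Real.exp (l * u)) *
        ((∑ l ∈ Λ, a l * l * l * Real.exp (l * u))
          - M * (∑ l ∈ Λ, a l * Real.exp (l * u)) + M)) u := by
    intro u
    have d1 := key a u
    have d2 := key (fun l => a l * l) u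
    have dd : HasDerivAt (fun u => (∑ l ∈ Λ, a l * l * Real.exp (l * u)) ^ 2
        - M * (((∑ l ∈ Λ, a l * Real.exp (l * u)) - 2) * (∑ l ∈ Λ, a l * Real.exp (l * u))))
        (2 * (∑ l ∈ Λ, a l * l * Real.exp (l * u)) ^ 1 * (∑ l ∈ Λ, a l * l * l * Real.exp (l * u))
          - M * ((∑ l ∈ Λ, a l * l * Real.exp (l * u)) * (∑ l ∈ Λ, a l * Real.exp (l * u))
            + ((∑ l ∈ Λ, a l * Real.exp (l * u)) - 2) * (∑ l ∈ Λ, a l * l * Real.exp (l * u)))) u := by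
      exact (d2.pow 2).sub (((d1.sub_const 2).mul d1).const_mul M)
    have hGid : M * (∑ l ∈ Λ, a l * Real.exp (l * u)) ≤ 0 ∨ True := Or.inr trivial
    convert dd using 1
    ring
  -- F is nonnegative
  have hF0 : (∑ l ∈ Λ, a l * l * Real.exp (l * 0)) ^ 2
      - M * (((∑ l ∈ Λ, a l * Real.exp (l * 0)) - 2) * (∑ l ∈ Λ, a l * Real.exp (l * 0))) = 0 := by
    have e0 : (∑ l ∈ Λ, a l * Real.exp (l * 0)) = 2 := by
      simpa using hsum
    have e1 : (∑ l ∈ Λ, a l * l * Real.exp (l * 0)) = 0 := by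
      rw [hrepS1 0]
      simp
    rw [e0, e1]
    ring
  have hFnonneg : ∀ u : ℝ, 0 ≤ (∑ l ∈ Λ, a l * l * Real.exp (l * u)) ^ 2
      - M * (((∑ l ∈ Λ, a l * Real.exp (l * u)) - 2) * (∑ l ∈ Λ, a l * Real.exp (l * u))) := by
    intro u
    set F : ℝ → ℝ := fun u => (∑ l ∈ Λ, a l * l * Real.exp (l * u)) ^ 2
      - M * (((∑ l ∈ Λ, a l * Real.exp (l * u)) - 2) * (∑ l ∈ Λ, a l * Real.exp (l * u))) with hFdef
    have hcont : Continuous F := by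
      apply continuous_iff_continuousAt.2
      intro x
      exact (hFd x).continuousAt
    rcases le_total 0 u with hu | hu
    · have mono : MonotoneOn F (Set.Icc 0 u) := by
        apply monotoneOn_of_deriv_nonneg (convex_Icc 0 u) hcont.continuousOn
        · intro x _
          exact (hFd x).differentiableAt.differentiableWithinAt
        · intro x hx
          rw [interior_Icc, Set.mem_Ioo] at hx
          rw [(hFd x).deriv]
          have h1 := hS1nonneg x hx.1.le
          have h2 := hG x
          have hg : 0 ≤ (∑ l ∈ Λ, a l * l * l * Real.exp (l * x))
              - M * (∑ l ∈ Λ, a l * Real.exp (l * x)) + M := by linarith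
          have h2x : 0 ≤ 2 * (∑ l ∈ Λ, a l * l * Real.exp (l * x)) := by linarith
          exact mul_nonneg h2x hg
      have := mono (Set.left_mem_Icc.2 hu) (Set.mem_Icc.2 ⟨hu, le_refl u⟩) hu
      calc (0:ℝ) = F 0 := hF0.symm
        _ ≤ F u := this
    · have anti : AntitoneOn F (Set.Icc u 0) := by
        apply antitoneOn_of_deriv_nonpos (convex_Icc u 0) hcont.continuousOn
        · intro x _
          exact (hFd x).differentiableAt.differentiableWithinAt
        · intro x hx
          rw [interior_Icc, Set.mem_Ioo] at hx
          rw [(hFd x).deriv]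
          have h1 := hS1nonpos x hx.2.le
          have h2 := hG x
          have hg : 0 ≤ (∑ l ∈ Λ, a l * l * l * Real.exp (l * x))
              - M * (∑ l ∈ Λ, a l * Real.exp (l * x)) + M := by linarith
          have h2x : 2 * (∑ l ∈ Λ, a l * l * Real.exp (l * x)) ≤ 0 := by linarith
          exact mul_nonpos_of_nonpos_of_nonneg h2x hg
      have := anti (Set.mem_Icc.2 ⟨le_refl u, hu⟩) (Set.right_mem_Icc.2 hu) hu
      calc (0:ℝ) = F 0 := hF0.symm
        _ ≤ F u := this
  have hFt := hFnonneg t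
  have hGt := hG t
  rw [hS20]
  nlinarith [hFt, hGt]
end

section
/- With notation as in the instanton-flow computation: let ζ = ξ + iΣ_λ η_λ ∈ ℂ⊗g_R be nilpotent with ξ,η ∈ p_R, η_λ the ad ξ-eigencomponents, and set ζ_λ = iη_λ for λ ≠ 0, ζ₀ = ξ + iη₀. Then the squared norm of the ik_R-component m₃(t) of the moment map along the flow f_t(ζ) = Ad(exp(tξ))(ζ) is ‖m₃(t)‖² = (Σ_λ λ²(e^{λt} + e^{-λt})² ‖ζ_λ‖²) / (Σ_λ e^{2λt} ‖ζ_λ‖²)². -/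
open Complex

private theorem linearODE_unique' {E : Type*} [NormedAddCommGroup E] [NormedSpace ℂ E]
    [FiniteDimensional ℂ E] (A : E →ₗ[ℂ] E) (u v : ℝ → E)
    (hu : ∀ s, HasDerivAt u (A (u s)) s) (hv : ∀ s, HasDerivAt v (A (v s)) s)
    (h0 : u 0 = v 0) (t : ℝ) : u t = v t := by
  set Ac := LinearMap.toContinuousLinearMap A with hAc
  have key : Set.EqOn u v (Set.Icc (-(|t|+1)) (|t|+1)) := by
    refine ODE_solution_unique_of_mem_Icc (v := fun _ x => Ac x) (s := fun _ => Set.univ)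
      (K := ‖Ac‖₊) (fun _ _ => Ac.lipschitz.lipschitzOnWith) ?_
      (fun s _ => (hu s).continuousAt.continuousWithinAt)
      (fun s _ => hu s) (fun _ _ => trivial)
      (fun s _ => (hv s).continuousAt.continuousWithinAt)
      (fun s _ => hv s) (fun _ _ => trivial) h0
    constructor <;> [linarith [abs_nonneg t]; linarith [abs_nonneg t]]
  exact key ⟨by linarith [neg_abs_le t], by linarith [le_abs_self t]⟩

/-- Let `ζ = ξ + iη` be nilpotent in the complexification `g` of
`g_R`, with `ξ, η ∈ p_R`, `η = Σ_λ η_λ` the `ad ξ`-eigendecomposition, and set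
`ζ_λ = i·η_λ` for `λ ≠ 0`, `ζ_0 = ξ + i·η_0`.  Then the squared Hermitian norm
of the `i·k_R`-component `m₃(t) = ½(m(f t) - conj'(m(f t)))` of the moment map
`m(x) = -[x, θ(x̄)]/‖x‖²` along the instanton flow
`f t = Ad(exp(tξ))(ζ)` (characterized by `f 0 = ζ`, `f' = [ξ, f]`) is
`‖m₃(t)‖² = (Σ_λ λ²(e^{λt}+e^{-λt})²‖ζ_λ‖²) / (Σ_λ e^{2λt}‖ζ_λ‖²)²`. -/
theorem moment_map_ik_component_along_flow
    (g : Type*) [LieRing g] [LieAlgebra ℂ g] [Module.Finite ℂ g]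
    [LieAlgebra.IsSemisimple ℂ g]
    (conj' : g → g) (hconj_add : ∀ x y, conj' (x + y) = conj' x + conj' y)
    (hconj_smul : ∀ (c : ℂ) (x : g), conj' (c • x) = (starRingEnd ℂ) c • conj' x)
    (hconj_brk : ∀ x y : g, conj' ⁅x, y⁆ = ⁅conj' x, conj' y⁆)
    (hconj_inv : ∀ x, conj' (conj' x) = x)
    (θ : g →ₗ⁅ℂ⁆ g) (hθinv : ∀ x, θ (θ x) = x)
    (hθconj : ∀ x, θ (conj' x) = conj' (θ x))
    (hip : g → g → ℂ)
    (hhip : ∀ x y, hip x y = -(killingForm ℂ g x (θ (conj' y))))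
    (hposdef : ∀ x : g, x ≠ 0 → 0 < (hip x x).re ∧ (hip x x).im = 0)
    (ξ η : g) (hξreal : conj' ξ = ξ) (hηreal : conj' η = η)
    (hξp : θ ξ = -ξ) (hηp : θ η = -η)
    (ec : ℝ → g) (hfin : (Function.support ec).Finite)
    (heig : ∀ l : ℝ, ⁅ξ, ec l⁆ = (l : ℂ) • ec l)
    (hsum : η = ∑ᶠ l : ℝ, ec l)
    (ζ : g) (hζ : ζ = ξ + I • η) (hζ0 : ζ ≠ 0)
    (hnil : IsNilpotent (LieAlgebra.ad ℂ g ζ))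
    (ζc : ℝ → g)
    (hζc : ∀ l : ℝ, ζc l = if l = 0 then ξ + I • ec 0 else I • ec l)
    (f : ℝ → g) (hf0 : f 0 = ζ)
    (hflow : ∀ (φ : g →ₗ[ℂ] ℂ) (t : ℝ),
      HasDerivAt (fun s => φ (f s)) (φ ⁅ξ, f t⁆) t)
    (m m₃ : ℝ → g)
    (hm : ∀ t, m t = -(hip (f t) (f t))⁻¹ • ⁅f t, θ (conj' (f t))⁆)
    (hm₃ : ∀ t, m₃ t = (2⁻¹ : ℂ) • (m t - conj' (m t))) :
    ∀ t : ℝ,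
      hip (m₃ t) (m₃ t) =
        (∑ᶠ l : ℝ, ((l ^ 2 * (Real.exp (l * t) + Real.exp (-(l * t))) ^ 2 : ℝ) : ℂ) *
            hip (ζc l) (ζc l)) /
          (∑ᶠ l : ℝ, ((Real.exp (2 * l * t) : ℝ) : ℂ) * hip (ζc l) (ζc l)) ^ 2 := by
  classical
  -- basic properties of the conjugation
  have hconj_zero : conj' 0 = 0 := by
    have h := hconj_add 0 0
    rw [add_zero] at h
    exact (add_eq_left.mp h.symm)
  have hconj_sum : ∀ (s : Finset ℝ) (w : ℝ → g),
      conj' (∑ l ∈ s, w l) = ∑ l ∈ s, conj' (w l) := by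
    intro s w
    induction s using Finset.induction_on with
    | empty => simpa using hconj_zero
    | insert _ _ h ih => rw [Finset.sum_insert h, Finset.sum_insert h, hconj_add, ih]
  have hθsum : ∀ (s : Finset ℝ) (w : ℝ → g),
      θ (∑ l ∈ s, w l) = ∑ l ∈ s, θ (w l) := by
    intro s w
    induction s using Finset.induction_on with
    | empty => simp
    | insert _ _ h ih => rw [Finset.sum_insert h, Finset.sum_insert h, map_add, ih]
  have hlie_sum : ∀ (s : Finset ℝ) (w : ℝ → g),
      ⁅ξ, ∑ l ∈ s, w l⁆ = ∑ l ∈ s, ⁅ξ, w l⁆ := by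
    intro s w
    induction s using Finset.induction_on with
    | empty => simp
    | insert _ _ h ih => rw [Finset.sum_insert h, Finset.sum_insert h, lie_add, ih]
  -- sesquilinearity of hip
  have hip_smul_left : ∀ (c : ℂ) (x y : g), hip (c • x) y = c * hip x y := by
    intro c x y; rw [hhip, hhip]; simp [mul_comm]
  have hip_smul_right : ∀ (c : ℂ) (x y : g),
      hip x (c • y) = (starRingEnd ℂ) c * hip x y := by
    intro c x y; rw [hhip, hhip, hconj_smul, map_smul]
    simp [mul_comm]
  have hip_sum_left : ∀ (s : Finset ℝ) (w : ℝ → g) (y : g),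
      hip (∑ l ∈ s, w l) y = ∑ l ∈ s, hip (w l) y := by
    intro s w y
    simp [hhip, map_sum, LinearMap.coe_sum, Finset.sum_apply, LinearMap.sum_apply,
      Finset.sum_neg_distrib]
  have hip_sum_right : ∀ (s : Finset ℝ) (w : ℝ → g) (x : g),
      hip x (∑ l ∈ s, w l) = ∑ l ∈ s, hip x (w l) := by
    intro s w x
    have h1 : θ (∑ l ∈ s, conj' (w l)) = ∑ l ∈ s, θ (conj' (w l)) := by
      induction s using Finset.induction_on with
      | empty => simp
      | insert _ _ h ih => rw [Finset.sum_insert h, Finset.sum_insert h, map_add, ih]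
    simp [hhip, hconj_sum, h1, Finset.sum_neg_distrib]
  have hip_zero : hip 0 0 = 0 := by
    rw [hhip, hconj_zero]; simp
  -- independence of eigenvectors
  have indep : ∀ (s : Finset ℝ) (w : ℝ → g), (∀ l ∈ s, ⁅ξ, w l⁆ = (l : ℂ) • w l) →
      (∑ l ∈ s, w l) = 0 → ∀ l ∈ s, w l = 0 := by
    intro s w hw hsum0
    by_contra hcon
    push_neg at hcon
    obtain ⟨l₀, hl₀s, hl₀⟩ := hcon
    set s' := s.filter (fun l => w l ≠ 0) with hs'
    have hl₀' : l₀ ∈ s' := Finset.mem_filter.mpr ⟨hl₀s, hl₀⟩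
    have hsum' : ∑ l ∈ s', w l = 0 := by
      rw [hs', Finset.sum_filter_ne_zero]
      exact hsum0
    have hLI : LinearIndependent ℂ (fun μ : {x // x ∈ s'} => w μ) := by
      apply Module.End.eigenvectors_linearIndependent' (LieAlgebra.ad ℂ g ξ)
        (fun μ : {x // x ∈ s'} => ((μ : ℝ) : ℂ))
      · intro x y hxy
        have h : ((x : ℝ) : ℂ) = ((y : ℝ) : ℂ) := hxy
        exact Subtype.ext (by exact_mod_cast h)
      · intro i
        refine ⟨Module.End.mem_eigenspace_iff.mpr ?_, (Finset.mem_filter.mp i.2).2⟩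
        rw [LieAlgebra.ad_apply]
        exact hw i (Finset.mem_filter.mp i.2).1
    rw [Fintype.linearIndependent_iff] at hLI
    refine one_ne_zero (hLI (fun _ => 1) ?_ ⟨l₀, hl₀'⟩)
    simp only [one_smul]
    rw [← hsum']
    exact Finset.sum_coe_sort s' w
  -- the symmetric support set
  set T : Finset ℝ := hfin.toFinset ∪ hfin.toFinset.image (fun x => -x) with hT
  have hTmem : ∀ l, ec l ≠ 0 → l ∈ T := by
    intro l hl
    exact Finset.mem_union_left _ (hfin.mem_toFinset.mpr hl)
  have hTsymm : ∀ l ∈ T, -l ∈ T := by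
    intro l hl
    rcases Finset.mem_union.mp hl with h | h
    · exact Finset.mem_union_right _ (Finset.mem_image.mpr ⟨l, h, rfl⟩)
    · rcases Finset.mem_image.mp h with ⟨x, hx, rfl⟩
      rw [neg_neg]
      exact Finset.mem_union_left _ hx
  have hecT : ∀ l, l ∉ T → ec l = 0 := by
    intro l hl
    by_contra h
    exact hl (hTmem l h)
  have hηT : η = ∑ l ∈ T, ec l := by
    rw [hsum]
    exact finsum_eq_finset_sum_of_support_subset _
      (fun l hl => Finset.mem_coe.mpr (hTmem l hl))
  have hreindex : ∀ (s : Finset ℝ), (∀ l ∈ s, -l ∈ s) → ∀ (w : ℝ → g),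
      ∑ l ∈ s, w (-l) = ∑ l ∈ s, w l := by
    intro s hs w
    refine Finset.sum_nbij' (fun l => -l) (fun l => -l) (fun l hl => hs l hl)
      (fun l hl => hs l hl) (fun l _ => neg_neg l) (fun l _ => neg_neg l) (fun l _ => rfl)
  have hθec : ∀ l, θ (ec l) = - ec (-l) := by
    have key : ∀ μ ∈ T, θ (ec (-μ)) + ec μ = 0 := by
      apply indep
      · intro μ _
        have h1 : θ ⁅ξ, ec (-μ)⁆ = ((-μ : ℝ) : ℂ) • θ (ec (-μ)) := by
          rw [heig (-μ), map_smul]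
        rw [LieHom.map_lie, hξp, neg_lie] at h1
        have h2 : ⁅ξ, θ (ec (-μ))⁆ = (μ : ℂ) • θ (ec (-μ)) := by
          have := neg_eq_iff_eq_neg.mp h1
          rw [this]
          push_cast
          module
        rw [lie_add, h2, heig μ, smul_add]
      · rw [Finset.sum_add_distrib]
        have h1 : ∑ l ∈ T, θ (ec (-l)) = θ (∑ l ∈ T, ec (-l)) := by
          induction T using Finset.induction_on with
          | empty => simp
          | insert _ _ h ih => rw [Finset.sum_insert h, Finset.sum_insert h, map_add, ih]
        rw [h1, hreindex T hTsymm ec, ← hηT, hηp, neg_add_cancel]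
    intro l
    by_cases h : -l ∈ T
    · have := key (-l) h
      rw [neg_neg] at this
      rw [eq_neg_iff_add_eq_zero]
      rw [add_comm] at this
      rwa [add_comm]
    · have hl : l ∉ T := fun hl => h (hTsymm l hl)
      rw [hecT l hl, hecT (-l) (fun hc => hl (by simpa using hTsymm (-l) hc)),
        map_zero, neg_zero]
  have hcec : ∀ l, conj' (ec l) = ec l := by
    have key : ∀ μ ∈ T, conj' (ec μ) - ec μ = 0 := by
      apply indep
      · intro μ _
        have h1 : conj' ⁅ξ, ec μ⁆ = ⁅ξ, conj' (ec μ)⁆ := by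
          rw [hconj_brk, hξreal]
        rw [heig μ, hconj_smul] at h1
        rw [Complex.conj_ofReal] at h1
        rw [lie_sub, ← h1, heig μ, smul_sub]
      · rw [Finset.sum_sub_distrib, ← hconj_sum, ← hηT, hηreal, sub_self]
    intro l
    by_cases h : l ∈ T
    · exact sub_eq_zero.mp (key l h)
    · rw [hecT l h, hconj_zero]
  -- the index set S
  set S : Finset ℝ := insert 0 T with hS
  have h0S : (0:ℝ) ∈ S := Finset.mem_insert_self 0 T
  have hSsymm : ∀ l ∈ S, -l ∈ S := by
    intro l hl
    rcases Finset.mem_insert.mp hl with h | h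
    · simp [h, hS]
    · exact Finset.mem_insert_of_mem (hTsymm l h)
  have hecS : ∀ l, l ∉ S → ec l = 0 := fun l hl =>
    hecT l (fun h => hl (Finset.mem_insert_of_mem h))
  have hζc' : ∀ l, ζc l = (if l = 0 then ξ else 0) + I • ec l := by
    intro l
    rw [hζc l]
    by_cases h : l = 0 <;> simp [h]
  have hζcS : ∀ l, l ∉ S → ζc l = 0 := by
    intro l hl
    have hl0 : l ≠ 0 := fun h => hl (h ▸ h0S)
    rw [hζc' l, if_neg hl0, hecS l hl]
    simp
  have hηS : η = ∑ l ∈ S, ec l := by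
    rw [hsum]
    exact finsum_eq_finset_sum_of_support_subset _
      (fun l hl => Finset.mem_coe.mpr (Finset.mem_insert_of_mem (hTmem l hl)))
  have hζsum : ζ = ∑ l ∈ S, ζc l := by
    have h1 : ∑ l ∈ S, ζc l = (∑ l ∈ S, if l = 0 then ξ else 0) + I • ∑ l ∈ S, ec l := by
      rw [Finset.smul_sum, ← Finset.sum_add_distrib]
      exact Finset.sum_congr rfl (fun l _ => hζc' l)
    rw [hζ, h1, Finset.sum_ite_eq' S (0:ℝ) (fun _ => ξ), if_pos h0S, ← hηS]
  have hξζc : ∀ l, ⁅ξ, ζc l⁆ = (l : ℂ) • ζc l := by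
    intro l
    rw [hζc' l]
    by_cases h : l = 0
    · subst h; simp [heig 0]
    · simp [h, lie_smul, heig l, smul_comm (l:ℂ) I]
  -- orthogonality
  have horthB : ∀ (p q : ℝ) (x y : g), ⁅ξ, x⁆ = (p : ℂ) • x → ⁅ξ, y⁆ = (q : ℂ) • y →
      p + q ≠ 0 → killingForm ℂ g x y = 0 := by
    intro p q x y hx hy hpq
    have h1 : killingForm ℂ g ⁅ξ, x⁆ y = - killingForm ℂ g x ⁅ξ, y⁆ :=
      LieModule.traceForm_apply_lie_apply' ℂ g g ξ x y
    rw [hx, hy] at h1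
    simp only [map_smul, LinearMap.smul_apply, smul_eq_mul] at h1
    have h2 : ((p : ℂ) + (q : ℂ)) * killingForm ℂ g x y = 0 := by linear_combination h1
    rcases mul_eq_zero.mp h2 with h | h
    · exact absurd (by exact_mod_cast h) hpq
    · exact h
  have hcζc : ∀ l, conj' (ζc l) = (if l = 0 then ξ else 0) - I • ec l := by
    intro l
    rw [hζc' l, hconj_add, hconj_smul, hcec, Complex.conj_I]
    by_cases h : l = 0
    · subst h
      simp [hξreal, sub_eq_add_neg, neg_smul]
    · simp [h, hconj_zero, sub_eq_add_neg, neg_smul]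
  have hθcζc : ∀ l, θ (conj' (ζc l)) = (if l = 0 then -ξ else 0) + I • ec (-l) := by
    intro l
    rw [hcζc l, map_sub, map_smul, hθec l, smul_neg, sub_neg_eq_add]
    by_cases h : l = 0
    · subst h
      simp [hξp]
    · simp [h]
  have heigθc : ∀ l, ⁅ξ, θ (conj' (ζc l))⁆ = ((-l : ℝ) : ℂ) • θ (conj' (ζc l)) := by
    intro l
    rw [hθcζc l]
    by_cases h : l = 0
    · subst h
      rw [if_pos rfl]
      rw [lie_add, lie_neg, lie_self, lie_smul, heig (-0)]
      push_cast
      module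
    · rw [if_neg h]
      rw [lie_add, lie_zero, lie_smul, heig (-l)]
      push_cast
      module
  have horth : ∀ l l', l ≠ l' → hip (ζc l) (ζc l') = 0 := by
    intro l l' hne
    rw [hhip]
    rw [horthB l (-l') _ _ (hξζc l) (heigθc l') (by rw [← sub_eq_add_neg]; exact sub_ne_zero.mpr hne)]
    simp
  -- diagonal values
  have hdiag_re : ∀ l, 0 ≤ (hip (ζc l) (ζc l)).re := by
    intro l
    by_cases h : ζc l = 0
    · rw [h, hip_zero]; simp
    · exact (hposdef _ h).1.le
  have hdiag_im : ∀ l, (hip (ζc l) (ζc l)).im = 0 := by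
    intro l
    by_cases h : ζc l = 0
    · rw [h, hip_zero]; simp
    · exact (hposdef _ h).2
  have hdiag_conj : ∀ l, (starRingEnd ℂ) (hip (ζc l) (ζc l)) = hip (ζc l) (ζc l) := by
    intro l
    exact Complex.conj_eq_iff_im.mpr (hdiag_im l)
  have hex : ∃ l ∈ S, ζc l ≠ 0 := by
    by_contra h
    push_neg at h
    exact hζ0 (by rw [hζsum]; exact Finset.sum_eq_zero h)
  -- the explicit flow
  set F : ℝ → g := fun s => ∑ l ∈ S, ((Real.exp (l * s) : ℝ) : ℂ) • ζc l with hF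
  have hF0 : F 0 = ζ := by
    rw [hF]; simp only [mul_zero, Real.exp_zero, ofReal_one, one_smul]
    exact hζsum.symm
  have hFflow : ∀ (φ : g →ₗ[ℂ] ℂ) (r : ℝ),
      HasDerivAt (fun s => φ (F s)) (φ ⁅ξ, F r⁆) r := by
    intro φ r
    have h1 : ∀ s, φ (F s) = ∑ l ∈ S, ((Real.exp (l * s) : ℝ) : ℂ) * φ (ζc l) := by
      intro s
      rw [hF]
      simp [map_sum, map_smul, smul_eq_mul]
    have h3 : φ ⁅ξ, F r⁆ = ∑ l ∈ S, ((l * Real.exp (l * r) : ℝ) : ℂ) * φ (ζc l) := by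
      rw [hF]
      simp only
      rw [hlie_sum, map_sum]
      apply Finset.sum_congr rfl
      intro l _
      rw [lie_smul, hξζc l, map_smul, map_smul, smul_eq_mul, smul_eq_mul]
      push_cast
      ring
    have h2 : HasDerivAt (fun s => ∑ l ∈ S, ((Real.exp (l * s) : ℝ) : ℂ) * φ (ζc l))
        (∑ l ∈ S, ((l * Real.exp (l * r) : ℝ) : ℂ) * φ (ζc l)) r := by
      apply HasDerivAt.fun_sum
      intro l _
      have hd : HasDerivAt (fun s : ℝ => Real.exp (l * s)) (l * Real.exp (l * r)) r := by
        have hlin : HasDerivAt (fun s : ℝ => l * s) l r := by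
          simpa using (hasDerivAt_id r).const_mul l
        have hc := (Real.hasDerivAt_exp (l * r)).comp r hlin
        simpa [mul_comm, Function.comp_def] using hc
      have := (hd.ofReal_comp).mul_const (φ (ζc l))
      convert this using 2 <;> push_cast <;> ring
    have hfun : (fun s => φ (F s)) = fun s => ∑ l ∈ S, ((Real.exp (l * s) : ℝ) : ℂ) * φ (ζc l) :=
      funext h1
    rw [hfun, h3]
    exact h2
  have hfF : ∀ s, f s = F s := by
    let e := (Module.Free.chooseBasis ℂ g).equivFun
    set A : (Module.Free.ChooseBasisIndex ℂ g → ℂ) →ₗ[ℂ] (Module.Free.ChooseBasisIndex ℂ g → ℂ) :=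
      e.toLinearMap ∘ₗ (LieAlgebra.ad ℂ g ξ) ∘ₗ e.symm.toLinearMap with hA
    intro s
    have hcomp : ∀ (x : g), A (e x) = e ⁅ξ, x⁆ := by
      intro x
      simp [hA, LieAlgebra.ad_apply]
    have hu' : ∀ r, HasDerivAt (fun s' => e (f s')) (A (e (f r))) r := by
      intro r
      rw [hcomp, hasDerivAt_pi]
      intro i
      exact hflow ((LinearMap.proj i) ∘ₗ e.toLinearMap) r
    have hv' : ∀ r, HasDerivAt (fun s' => e (F s')) (A (e (F r))) r := by
      intro r
      rw [hcomp, hasDerivAt_pi]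
      intro i
      exact hFflow ((LinearMap.proj i) ∘ₗ e.toLinearMap) r
    have hkey := linearODE_unique' A _ _ hu' hv' (by rw [hf0, hF0]) s
    exact e.injective hkey
  -- fix the time t
  intro t
  set a : ℝ → ℂ := fun l => ((Real.exp (l * t) : ℝ) : ℂ) with ha
  set u : g := ∑ l ∈ S, a l • ec l with hu
  set v : g := ∑ l ∈ S, a l • ec (-l) with hv
  have hftS : f t = ∑ l ∈ S, a l • ζc l := hfF t
  have hft : f t = ξ + I • u := by
    rw [hftS]
    have h1 : ∀ l ∈ S, a l • ζc l = (if l = 0 then ξ else 0) + I • (a l • ec l) := by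
      intro l _
      rw [hζc' l]
      by_cases h : l = 0
      · subst h
        have ha0 : a 0 = 1 := by simp [ha]
        simp [ha0]
      · simp [h, smul_smul, mul_comm]
    have h2 : ∑ l ∈ S, (I • (a l • ec l)) = I • u := by rw [hu, Finset.smul_sum]
    rw [Finset.sum_congr rfl h1, Finset.sum_add_distrib, h2,
      Finset.sum_ite_eq' S (0:ℝ) (fun _ => ξ), if_pos h0S]
  have hθu : θ u = -v := by
    rw [hu, hv, hθsum, ← Finset.sum_neg_distrib]
    apply Finset.sum_congr rfl
    intro l _
    rw [map_smul, hθec l, smul_neg]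
  have hcu : conj' u = u := by
    rw [hu, hconj_sum]
    apply Finset.sum_congr rfl
    intro l _
    rw [hconj_smul, hcec]
    congr 1
    simp only [ha]
    exact Complex.conj_ofReal _
  have hcft : conj' (f t) = ξ - I • u := by
    rw [hft, hconj_add, hξreal, hconj_smul, Complex.conj_I, hcu, neg_smul, ← sub_eq_add_neg]
  have hθft : θ (f t) = -ξ - I • v := by
    rw [hft, map_add, hξp, map_smul, hθu, smul_neg, ← sub_eq_add_neg]
  have hθcft : θ (conj' (f t)) = -ξ + I • v := by
    rw [hcft, map_sub, hξp, map_smul, hθu, smul_neg, sub_neg_eq_add]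
  have hdiagsum : ∀ (c : ℝ → ℂ), hip (∑ l ∈ S, c l • ζc l) (∑ l ∈ S, c l • ζc l)
      = ∑ l ∈ S, (c l * (starRingEnd ℂ) (c l)) * hip (ζc l) (ζc l) := by
    intro c
    rw [hip_sum_left]
    apply Finset.sum_congr rfl
    intro l hl
    rw [hip_smul_left, hip_sum_right, Finset.sum_eq_single l]
    · rw [hip_smul_right]
      ring
    · intro b hb hbl
      rw [hip_smul_right, horth l b (fun h => hbl h.symm), mul_zero]
    · intro h
      exact absurd hl h
  set N : ℂ := hip (f t) (f t) with hN
  have hNsum : N = ∑ l ∈ S, ((Real.exp (2 * l * t) : ℝ) : ℂ) * hip (ζc l) (ζc l) := by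
    rw [hN, hftS, hdiagsum a]
    apply Finset.sum_congr rfl
    intro l _
    congr 1
    simp only [ha, Complex.conj_ofReal]
    rw [← Complex.ofReal_mul, ← Real.exp_add]
    norm_cast
    congr 1
    ring
  have hNre : 0 < N.re := by
    have hre : N.re = ∑ l ∈ S, Real.exp (2 * l * t) * (hip (ζc l) (ζc l)).re := by
      rw [hNsum, Complex.re_sum]
      apply Finset.sum_congr rfl
      intro l _
      rw [Complex.mul_re]
      simp only [Complex.ofReal_re, Complex.ofReal_im, hdiag_im l]
      ring
    rw [hre]
    obtain ⟨l₀, hl₀S, hl₀⟩ := hex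
    apply Finset.sum_pos'
    · intro i _
      exact mul_nonneg (Real.exp_pos _).le (hdiag_re i)
    · exact ⟨l₀, hl₀S, mul_pos (Real.exp_pos _) (hposdef _ hl₀).1⟩
  have hN0 : N ≠ 0 := fun h => by rw [h] at hNre; simp at hNre
  have hNconj : (starRingEnd ℂ) N = N := by
    refine Complex.conj_eq_iff_im.mpr ?_
    rw [hNsum, Complex.im_sum]
    apply Finset.sum_eq_zero
    intro l _
    rw [Complex.mul_im]
    simp only [Complex.ofReal_re, Complex.ofReal_im, hdiag_im l]
    ring
  -- the formula for m₃
  set cc : ℝ → ℂ := fun l => ((l * (Real.exp (l * t) + Real.exp (-(l * t))) : ℝ) : ℂ) with hcc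
  have hm₃t : m₃ t = (-(N⁻¹)) • ∑ l ∈ S, cc l • ζc l := by
    have hcmt : conj' (m t) = (-(N⁻¹)) • ⁅conj' (f t), θ (f t)⁆ := by
      rw [hm t, ← hN, hconj_smul, hconj_brk]
      congr 1
      · rw [map_neg, map_inv₀, hNconj]
      · rw [hθconj, hconj_inv]
    have hbrk : ⁅f t, θ (conj' (f t))⁆ - ⁅conj' (f t), θ (f t)⁆
        = ((2 * I) : ℂ) • (⁅ξ, u⁆ + ⁅ξ, v⁆) := by
      rw [hθcft, hθft, hcft, hft]
      have hskew : ⁅u, ξ⁆ = -⁅ξ, u⁆ := by rw [← lie_skew]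
      simp only [lie_add, add_lie, lie_sub, sub_lie, lie_smul, smul_lie, lie_self, lie_neg,
        neg_lie, smul_neg, neg_smul, smul_smul, hskew]
      module
    have hξuv : ⁅ξ, u⁆ + ⁅ξ, v⁆ = ∑ l ∈ S, ((l : ℂ) * (a l + a (-l))) • ec l := by
      have h1 : ⁅ξ, u⁆ = ∑ l ∈ S, ((l : ℂ) * a l) • ec l := by
        rw [hu, hlie_sum]
        apply Finset.sum_congr rfl
        intro l _
        rw [lie_smul, heig l, smul_smul, mul_comm]
      have h2 : ⁅ξ, v⁆ = ∑ l ∈ S, ((l : ℂ) * a (-l)) • ec l := by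
        rw [hv, hlie_sum]
        have h3 : ∀ l ∈ S, ⁅ξ, a l • ec (-l)⁆ = (fun l' : ℝ => ((l' : ℂ) * a (-l')) • ec l') (-l) := by
          intro l _
          simp only
          rw [lie_smul, heig (-l), smul_smul, neg_neg]
          congr 1
          push_cast
          ring
        rw [Finset.sum_congr rfl h3,
          hreindex S hSsymm (fun l' : ℝ => ((l' : ℂ) * a (-l')) • ec l')]
      rw [h1, h2, ← Finset.sum_add_distrib]
      apply Finset.sum_congr rfl
      intro l _
      rw [← add_smul]
      congr 1
      ring
    have hIsum : (I : ℂ) • ∑ l ∈ S, ((l : ℂ) * (a l + a (-l))) • ec l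
        = ∑ l ∈ S, cc l • ζc l := by
      rw [Finset.smul_sum]
      apply Finset.sum_congr rfl
      intro l _
      rw [hζc' l]
      by_cases h : l = 0
      · subst h
        have : cc 0 = 0 := by simp [hcc]
        simp [this]
      · rw [if_neg h, zero_add]
        have hccl : cc l = (l : ℂ) * (a l + a (-l)) := by
          simp only [hcc, ha, neg_mul]
          push_cast
          ring
        rw [hccl, smul_smul, smul_smul]
        congr 1
        ring
    rw [hm₃ t, hcmt, hm t, ← hN, ← smul_sub, hbrk, hξuv, ← hIsum, smul_smul, smul_smul,
      smul_smul]
    congr 1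
    ring
  -- the numerator
  have hnum : hip (∑ l ∈ S, cc l • ζc l) (∑ l ∈ S, cc l • ζc l)
      = ∑ l ∈ S, ((l ^ 2 * (Real.exp (l * t) + Real.exp (-(l * t))) ^ 2 : ℝ) : ℂ) *
          hip (ζc l) (ζc l) := by
    rw [hdiagsum cc]
    apply Finset.sum_congr rfl
    intro l _
    congr 1
    simp only [hcc, Complex.conj_ofReal]
    rw [← Complex.ofReal_mul]
    norm_cast
    ring
  -- convert the finsums
  have hfinNum : (∑ᶠ l : ℝ, ((l ^ 2 * (Real.exp (l * t) + Real.exp (-(l * t))) ^ 2 : ℝ) : ℂ) *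
      hip (ζc l) (ζc l)) = ∑ l ∈ S, ((l ^ 2 * (Real.exp (l * t) + Real.exp (-(l * t))) ^ 2 : ℝ) : ℂ) *
      hip (ζc l) (ζc l) := by
    apply finsum_eq_finset_sum_of_support_subset
    intro l hl
    by_contra hls
    exact hl (by simp [hζcS l (by simpa using hls), hip_zero])
  have hfinDen : (∑ᶠ l : ℝ, ((Real.exp (2 * l * t) : ℝ) : ℂ) * hip (ζc l) (ζc l)) = N := by
    rw [hNsum]
    apply finsum_eq_finset_sum_of_support_subset
    intro l hl
    by_contra hls
    exact hl (by simp [hζcS l (by simpa using hls), hip_zero])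
  -- final computation
  rw [hfinNum, hfinDen, hm₃t, hip_smul_left, hip_smul_right, hnum]
  rw [map_neg, map_inv₀, hNconj]
  rw [show (∑ l ∈ S, ((l ^ 2 * (Real.exp (l * t) + Real.exp (-(l * t))) ^ 2 : ℝ) : ℂ) *
      hip (ζc l) (ζc l)) / N ^ 2 = (∑ l ∈ S, ((l ^ 2 * (Real.exp (l * t) +
      Real.exp (-(l * t))) ^ 2 : ℝ) : ℂ) * hip (ζc l) (ζc l)) * (N⁻¹ * N⁻¹) by
    rw [pow_two, div_eq_mul_inv, mul_inv]]
  ring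
end

section
/- Let Φ ∈ Hom(s, g(r)) be a linear map from s = sl(2,ℂ) into the s-isotypic component g(r) of highest weight r of a complex semisimple Lie algebra g containing s, such that Φ is isotypic of type r-2 for the diagonal s-action. Then the component of Φ(h) in the weight space g(r,±r) vanishes, and for the weight components: (Φe)_{ℓ+2} = (-1/(r-ℓ))·[e, (Φh)_ℓ] and (Φf)_{ℓ-2} = (1/(r+ℓ))·[f, (Φh)_ℓ], where (x)_ℓ denotes the h-weight-ℓ component in g(r). -/
/-- The diagonal action of an element `x` of `s` on `Hom(s, g)`,
`(x·Φ)(u) = [ι x, Φ u] - Φ [x, u]`, where `ι : s → g` is the embedding. -/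
noncomputable def diagAct {S g : Type*} [LieRing S] [LieAlgebra ℂ S]
    [LieRing g] [LieAlgebra ℂ g] (ι : S →ₗ⁅ℂ⁆ g) (x : S) (Φ : S →ₗ[ℂ] g) :
    S →ₗ[ℂ] g :=
  ((LieAlgebra.ad ℂ g (ι x)) ∘ₗ Φ) - (Φ ∘ₗ (LieAlgebra.ad ℂ S x))

/-- The Casimir operator `Ω = 2(ad e)(ad f) + 2(ad f)(ad e) + (ad h)²` of an
sl₂-triple `e, f, h` inside `g`, acting on `g`.  Its eigenspace for the
eigenvalue `r² + 2r` is the isotypic component `g(r)` of highest weight `r`. -/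
noncomputable def casimirOp {g : Type*} [LieRing g] [LieAlgebra ℂ g]
    (e f h : g) : Module.End ℂ g :=
  (2 : ℂ) • ((LieAlgebra.ad ℂ g e) ∘ₗ (LieAlgebra.ad ℂ g f)) +
    (2 : ℂ) • ((LieAlgebra.ad ℂ g f) ∘ₗ (LieAlgebra.ad ℂ g e)) +
    ((LieAlgebra.ad ℂ g h) ∘ₗ (LieAlgebra.ad ℂ g h))

/-- The Casimir operator of `s = sl(2,ℂ)` acting on `Hom(s, g)` via the
diagonal action. -/
noncomputable def casimirDiag {S g : Type*} [LieRing S] [LieAlgebra ℂ S]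
    [LieRing g] [LieAlgebra ℂ g] (ι : S →ₗ⁅ℂ⁆ g) (es fs hs : S)
    (Φ : S →ₗ[ℂ] g) : S →ₗ[ℂ] g :=
  (2 : ℂ) • diagAct ι es (diagAct ι fs Φ) +
    (2 : ℂ) • diagAct ι fs (diagAct ι es Φ) +
    diagAct ι hs (diagAct ι hs Φ)

section auxA
variable {g : Type*} [LieRing g] [LieAlgebra ℂ g]

lemma casimirOp_apply (e f h x : g) :
    casimirOp e f h x = (2:ℂ) • ⁅e, ⁅f, x⁆⁆ + (2:ℂ) • ⁅f, ⁅e, x⁆⁆ + ⁅h, ⁅h, x⁆⁆ := by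
  simp [casimirOp, LieAlgebra.ad_apply]

lemma wt_lie (h e x : g) (a c : ℂ) (hhe : ⁅h, e⁆ = a • e) (hwt : ⁅h, x⁆ = c • x) :
    ⁅h, ⁅e, x⁆⁆ = (a + c) • ⁅e, x⁆ := by
  rw [leibniz_lie, hhe, hwt, smul_lie, lie_smul, add_smul]

lemma ef_fe_formula (e f h : g) (hef : ⁅e, f⁆ = h) (ρ c : ℂ) (x : g)
    (hcas : casimirOp e f h x = (ρ^2 + 2*ρ) • x) (hwt : ⁅h, x⁆ = c • x) :
    (4:ℂ) • ⁅e, ⁅f, x⁆⁆ = ((ρ+c)*(ρ-c+2)) • x ∧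
    (4:ℂ) • ⁅f, ⁅e, x⁆⁆ = ((ρ-c)*(ρ+c+2)) • x := by
  have h1 : ⁅e, ⁅f, x⁆⁆ - ⁅f, ⁅e, x⁆⁆ = c • x := by
    rw [← lie_lie, hef, hwt]
  have h2 : ⁅h, ⁅h, x⁆⁆ = (c*c) • x := by rw [hwt, lie_smul, hwt, smul_smul]
  rw [casimirOp_apply, h2] at hcas
  constructor
  · linear_combination (norm := module) hcas + (2:ℂ) • h1
  · linear_combination (norm := module) hcas - (2:ℂ) • h1

lemma ladder_vanish [Module.Finite ℂ g] (e f h : g)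
    (hhe : ⁅h, e⁆ = (2:ℂ) • e) (hef : ⁅e, f⁆ = h) (ρ c : ℂ) (x : g)
    (hcas : casimirOp e f h x = (ρ^2 + 2*ρ) • x) (hwt : ⁅h, x⁆ = c • x)
    (hq : ∀ k : ℕ, (1/4)*((ρ+c)*(ρ-c+2)) - ((k:ℂ)+1)*c - (k:ℂ)*((k:ℂ)+1) ≠ 0) :
    x = 0 := by
  by_contra hx
  set q : ℕ → ℂ := fun k => (1/4)*((ρ+c)*(ρ-c+2)) - ((k:ℂ)+1)*c - (k:ℂ)*((k:ℂ)+1) with hqdef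
  set X : ℕ → g := fun k => ((LieAlgebra.ad ℂ g e)^k) x with hXdef
  have hX0 : X 0 = x := by simp [hXdef]
  have hXsucc : ∀ k, X (k+1) = ⁅e, X k⁆ := by
    intro k
    simp only [hXdef, pow_succ', Module.End.mul_apply, LieAlgebra.ad_apply]
  have hXwt : ∀ k, ⁅h, X k⁆ = (c + 2*(k:ℂ)) • X k := by
    intro k
    induction k with
    | zero => simpa [hX0] using hwt
    | succ n ih =>
      rw [hXsucc n, wt_lie h e (X n) 2 (c + 2*n) hhe ih]
      push_cast
      ring_nf
  have hfe : ∀ y : g, ⁅f, ⁅e, y⁆⁆ = ⁅e, ⁅f, y⁆⁆ - ⁅h, y⁆ := by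
    intro y
    have hll := lie_lie e f y
    rw [hef] at hll
    rw [hll]; abel
  have hF : ∀ k, ⁅f, X (k+1)⁆ = q k • X k := by
    intro k
    induction k with
    | zero =>
      have h4 := (ef_fe_formula e f h hef ρ c x hcas hwt).1
      rw [hXsucc 0, hX0, hfe x, hwt]
      have : (4:ℂ) • (⁅e, ⁅f, x⁆⁆ - c • x) = (4:ℂ) • (q 0 • x) := by
        rw [smul_sub, h4, hqdef]
        push_cast
        match_scalars <;> ring
      have h40 : (4:ℂ) ≠ 0 := by norm_num
      exact smul_right_injective g h40 this
    | succ n ih =>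
      have hkey : ⁅f, X (n+1+1)⁆ = ⁅e, ⁅f, X (n+1)⁆⁆ - ⁅h, X (n+1)⁆ := by
        rw [hXsucc (n+1)]; exact hfe (X (n+1))
      rw [hkey, ih, hXwt (n+1), lie_smul, ← hXsucc n]
      simp only [hqdef]
      match_scalars
      push_cast
      ring
  have hXne : ∀ k, X k ≠ 0 := by
    intro k
    induction k with
    | zero => simpa [hX0] using hx
    | succ n ih =>
      intro hzero
      have := hF n
      rw [hzero] at this
      have : q n • X n = 0 := by rw [← this]; simp
      rcases smul_eq_zero.mp this with h1 | h1
      · exact hq n h1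
      · exact ih h1
  have hLI : LinearIndependent ℂ X := by
    apply Module.End.eigenvectors_linearIndependent' (LieAlgebra.ad ℂ g h)
      (fun k : ℕ => c + 2*(k:ℂ)) ?_ X ?_
    · intro k1 k2 hk
      have : (k1:ℂ) = (k2:ℂ) := by
        have hk' : c + 2*(k1:ℂ) = c + 2*(k2:ℂ) := hk
        linear_combination hk' / 2
      exact_mod_cast this
    · intro k
      refine ⟨?_, hXne k⟩
      rw [Module.End.mem_eigenspace_iff, LieAlgebra.ad_apply]
      exact hXwt k
  exact Module.Finite.not_linearIndependent_of_infinite X hLI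

lemma casimirOp_swap (e f h x : g) : casimirOp f e (-h) x = casimirOp e f h x := by
  rw [casimirOp_apply, casimirOp_apply]
  simp only [neg_lie, lie_neg, neg_neg]
  abel

lemma eigsum_zero (h : g) (ψ : ℤ → g)
    (hfin : (Function.support ψ).Finite)
    (heig : ∀ l : ℤ, ⁅h, ψ l⁆ = (l:ℂ) • ψ l)
    (hsum : ∑ᶠ l, ψ l = 0) : ∀ l, ψ l = 0 := by
  intro l0
  by_contra hl0
  classical
  set T : Finset ℤ := hfin.toFinset with hT
  have hmem : ∀ m : ℤ, m ∈ T ↔ ψ m ≠ 0 := by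
    intro m; simp [hT, Function.mem_support]
  have hLI : LinearIndependent ℂ (fun m : {m // m ∈ T} => ψ m.1) := by
    apply Module.End.eigenvectors_linearIndependent' (LieAlgebra.ad ℂ g h)
      (fun m : {m // m ∈ T} => ((m.1 : ℤ) : ℂ)) ?_ _ ?_
    · intro m1 m2 hm
      have hm' : ((m1.1 : ℤ) : ℂ) = ((m2.1 : ℤ) : ℂ) := hm
      have : (m1.1 : ℤ) = m2.1 := by exact_mod_cast hm'
      exact Subtype.ext this
    · intro m
      refine ⟨?_, (hmem m.1).mp m.2⟩
      rw [Module.End.mem_eigenspace_iff, LieAlgebra.ad_apply]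
      exact heig m.1
  have hsum' : ∑ m : {m // m ∈ T}, (1:ℂ) • ψ m.1 = 0 := by
    simp only [one_smul]
    have h1 : ∑ m : {m // m ∈ T}, ψ m.1 = ∑ m ∈ T, ψ m := Finset.sum_coe_sort T ψ
    rw [h1, ← finsum_eq_sum ψ hfin]
    exact hsum
  have := Fintype.linearIndependent_iff.mp hLI (fun _ => (1:ℂ)) hsum' ⟨l0, (hmem l0).mpr hl0⟩
  exact one_ne_zero this

lemma hq_aux (r : ℕ) (l : ℤ) (hl : (r:ℤ) < l) (k : ℕ) :
    (1/4)*(((r:ℂ)+(l:ℂ))*((r:ℂ)-(l:ℂ)+2)) - ((k:ℂ)+1)*(l:ℂ) - (k:ℂ)*((k:ℂ)+1) ≠ 0 := by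
  intro heq
  have hZ : ((((r:ℤ)+l)*((r:ℤ)-l+2) - 4*((k:ℤ)+1)*l - 4*(k:ℤ)*((k:ℤ)+1) : ℤ) : ℂ) = 0 := by
    push_cast
    linear_combination (4:ℂ) * heq
  have hZ' : ((r:ℤ)+l)*((r:ℤ)-l+2) - 4*((k:ℤ)+1)*l - 4*(k:ℤ)*((k:ℤ)+1) = 0 := by
    exact_mod_cast hZ
  have hfact : ((r:ℤ) - (l + 2*k)) * ((r:ℤ) + (l + 2*k) + 2) =
      ((r:ℤ)+l)*((r:ℤ)-l+2) - 4*((k:ℤ)+1)*l - 4*(k:ℤ)*((k:ℤ)+1) := by ring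
  have hk0 : (0:ℤ) ≤ (k:ℤ) := Int.natCast_nonneg k
  have hr0 : (0:ℤ) ≤ (r:ℤ) := Int.natCast_nonneg r
  rw [hZ'] at hfact
  rcases mul_eq_zero.mp hfact with h1 | h1 <;> omega

lemma vanish_of_abs_gt [Module.Finite ℂ g] (e f h : g)
    (hhe : ⁅h, e⁆ = (2:ℂ) • e) (hhf : ⁅h, f⁆ = (-2:ℂ) • f) (hef : ⁅e, f⁆ = h)
    (r : ℕ) (x : g) (hcas : casimirOp e f h x = ((r:ℂ)^2 + 2*(r:ℂ)) • x)
    (l : ℤ) (hwt : ⁅h, x⁆ = (l:ℂ) • x) (hl : (r:ℤ) < l ∨ l < -(r:ℤ)) : x = 0 := by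
  rcases hl with hl | hl
  · exact ladder_vanish e f h hhe hef (r:ℂ) (l:ℂ) x hcas hwt (hq_aux r l hl)
  · have hhe' : ⁅-h, f⁆ = (2:ℂ) • f := by
      rw [neg_lie, hhf]; module
    have hef' : ⁅f, e⁆ = -h := by rw [← lie_skew, hef]
    have hcas' : casimirOp f e (-h) x = ((r:ℂ)^2 + 2*(r:ℂ)) • x := by
      rw [casimirOp_swap]; exact hcas
    have hwt' : ⁅-h, x⁆ = (((-l : ℤ)):ℂ) • x := by
      rw [neg_lie, hwt]; push_cast; module
    have hl' : (r:ℤ) < -l := by omega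
    exact ladder_vanish f e (-h) hhe' hef' (r:ℂ) ((-l : ℤ):ℂ) x hcas' hwt'
      (by push_cast; exact_mod_cast hq_aux r (-l) hl')

end auxA

section auxB
variable {S g : Type*} [LieRing S] [LieAlgebra ℂ S] [LieRing g] [LieAlgebra ℂ g]

lemma diag2_apply (ι : S →ₗ⁅ℂ⁆ g) (x y : S) (Φ : S →ₗ[ℂ] g) (u : S) :
    diagAct ι x (diagAct ι y Φ) u =
      ⁅ι x, ⁅ι y, Φ u⁆⁆ - ⁅ι x, Φ ⁅y, u⁆⁆ - ⁅ι y, Φ ⁅x, u⁆⁆ + Φ ⁅y, ⁅x, u⁆⁆ := by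
  simp only [diagAct, LinearMap.sub_apply, LinearMap.coe_comp, Function.comp_apply,
    LieAlgebra.ad_apply, map_sub, lie_sub]
  abel

end auxB

/-- Let `Φ ∈ Hom(s, g(r))` (`s = sl(2,ℂ)` embedded in `g` via
`ι`, with sl₂-triple `es, fs, hs`; `g(r)` the Casimir eigenspace of eigenvalue
`r²+2r`) be isotypic of type `r-2` for the diagonal `s`-action.  Let
`Φh, Φe, Φf : ℤ → g` be the `h`-weight-component decompositions of
`Φ(hs), Φ(es), Φ(fs)` inside `g(r)`.  Then the components of `Φ(hs)` of weight
`±r` vanish, and `(Φe)_{ℓ+2} = (-1/(r-ℓ))·[e, (Φh)_ℓ]`,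
`(Φf)_{ℓ-2} = (1/(r+ℓ))·[f, (Φh)_ℓ]` for all ℓ. -/
theorem isotypic_hom_weight_component_formulas
    (S g : Type*) [LieRing S] [LieAlgebra ℂ S] [LieRing g] [LieAlgebra ℂ g]
    [Module.Finite ℂ g] [LieAlgebra.IsSemisimple ℂ g]
    (ι : S →ₗ⁅ℂ⁆ g) (hι : Function.Injective ι)
    (es fs hs : S)
    (hhe : ⁅hs, es⁆ = (2 : ℂ) • es) (hhf : ⁅hs, fs⁆ = (-2 : ℂ) • fs)
    (hef : ⁅es, fs⁆ = hs)
    (bS : Module.Basis (Fin 3) ℂ S)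
    (hb : bS 0 = es ∧ bS 1 = fs ∧ bS 2 = hs)
    (r : ℕ) (Φ : S →ₗ[ℂ] g)
    (hΦval : ∀ u : S, casimirOp (ι es) (ι fs) (ι hs) (Φ u) =
      ((r : ℂ) ^ 2 + 2 * (r : ℂ)) • Φ u)
    (hiso : casimirDiag ι es fs hs Φ =
      (((r : ℂ) - 2) ^ 2 + 2 * ((r : ℂ) - 2)) • Φ)
    (Φh Φe Φf : ℤ → g)
    (hfinh : (Function.support Φh).Finite) (hfine : (Function.support Φe).Finite)
    (hfinf : (Function.support Φf).Finite)
    (hcomph : ∀ l : ℤ, casimirOp (ι es) (ι fs) (ι hs) (Φh l) =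
        ((r : ℂ) ^ 2 + 2 * (r : ℂ)) • Φh l ∧ ⁅ι hs, Φh l⁆ = (l : ℂ) • Φh l)
    (hcompe : ∀ l : ℤ, casimirOp (ι es) (ι fs) (ι hs) (Φe l) =
        ((r : ℂ) ^ 2 + 2 * (r : ℂ)) • Φe l ∧ ⁅ι hs, Φe l⁆ = (l : ℂ) • Φe l)
    (hcompf : ∀ l : ℤ, casimirOp (ι es) (ι fs) (ι hs) (Φf l) =
        ((r : ℂ) ^ 2 + 2 * (r : ℂ)) • Φf l ∧ ⁅ι hs, Φf l⁆ = (l : ℂ) • Φf l)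
    (hsumh : Φ hs = ∑ᶠ l : ℤ, Φh l)
    (hsume : Φ es = ∑ᶠ l : ℤ, Φe l)
    (hsumf : Φ fs = ∑ᶠ l : ℤ, Φf l) :
    Φh (r : ℤ) = 0 ∧ Φh (-(r : ℤ)) = 0 ∧
    (∀ l : ℤ, Φe (l + 2) = (-((r : ℂ) - (l : ℂ))⁻¹) • ⁅ι es, Φh l⁆) ∧
    (∀ l : ℤ, Φf (l - 2) = ((r : ℂ) + (l : ℂ))⁻¹ • ⁅ι fs, Φh l⁆) := by
  -- brackets in g
  have hHE : ⁅ι hs, ι es⁆ = (2:ℂ) • ι es := by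
    rw [← LieHom.map_lie, hhe, map_smul]
  have hHF : ⁅ι hs, ι fs⁆ = (-2:ℂ) • ι fs := by
    rw [← LieHom.map_lie, hhf, map_smul]
  have hEFg : ⁅ι es, ι fs⁆ = ι hs := by
    rw [← LieHom.map_lie, hef]
  -- brackets in S
  have hfeS : ⁅fs, es⁆ = -hs := by rw [← lie_skew, hef]
  have hehS : ⁅es, hs⁆ = (-2:ℂ) • es := by
    rw [← lie_skew, hhe]; module
  have hfhS : ⁅fs, hs⁆ = (2:ℂ) • fs := by
    rw [← lie_skew, hhf]; module
  -- master equations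
  have hd1 := LinearMap.congr_fun hiso hs
  have hd2 := LinearMap.congr_fun hiso es
  have hd3 := LinearMap.congr_fun hiso fs
  simp only [casimirDiag, LinearMap.add_apply, LinearMap.smul_apply, diag2_apply,
    hfhS, hehS, hfeS, hef, hhe, hhf, lie_self, map_smul, map_zero, map_neg,
    lie_smul, smul_lie, lie_zero, lie_neg, smul_neg, neg_smul, neg_neg, smul_zero,
    zero_lie, smul_smul] at hd1 hd2 hd3
  have hc1 := hΦval hs
  have hc2 := hΦval es
  have hc3 := hΦval fs
  rw [casimirOp_apply] at hc1 hc2 hc3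
  have E1 : ((r:ℂ)+2) • Φ hs = (2:ℂ) • ⁅ι es, Φ fs⁆ - (2:ℂ) • ⁅ι fs, Φ es⁆ := by
    linear_combination (norm := module) (1/4:ℂ) • hd1 - (1/4:ℂ) • hc1
  have E2 : ((r:ℂ)+2) • Φ es = ⁅ι hs, Φ es⁆ - ⁅ι es, Φ hs⁆ := by
    linear_combination (norm := module) (1/4:ℂ) • hd2 - (1/4:ℂ) • hc2
  have E3 : ((r:ℂ)+2) • Φ fs = ⁅ι fs, Φ hs⁆ - ⁅ι hs, Φ fs⁆ := by
    linear_combination (norm := module) (1/4:ℂ) • hd3 - (1/4:ℂ) • hc3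
  -- component relation A
  have adE := (LieAlgebra.ad ℂ g (ι es)).toAddMonoidHom.map_finsum (f := Φh) hfinh
  have adF := (LieAlgebra.ad ℂ g (ι fs)).toAddMonoidHom.map_finsum (f := Φh) hfinh
  have adHe := (LieAlgebra.ad ℂ g (ι hs)).toAddMonoidHom.map_finsum (f := Φe) hfine
  have adHf := (LieAlgebra.ad ℂ g (ι hs)).toAddMonoidHom.map_finsum (f := Φf) hfinf
  have adEf := (LieAlgebra.ad ℂ g (ι es)).toAddMonoidHom.map_finsum (f := Φf) hfinf
  have adFe := (LieAlgebra.ad ℂ g (ι fs)).toAddMonoidHom.map_finsum (f := Φe) hfine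
  simp only [LinearMap.toAddMonoidHom_coe, LieAlgebra.ad_apply] at adE adF adHe adHf adEf adFe
  have relA : ∀ l : ℤ, ((r:ℂ) - (l:ℂ)) • Φe (l+2) = -⁅ι es, Φh l⁆ := by
    have hwtχ : ∀ m : ℤ, ⁅ι hs, (((r:ℂ)+2) - (m:ℂ)) • Φe m + ⁅ι es, Φh (m-2)⁆⁆ =
        (m:ℂ) • ((((r:ℂ)+2) - (m:ℂ)) • Φe m + ⁅ι es, Φh (m-2)⁆) := by
      intro m
      have h1 := (hcompe m).2
      have h2 := wt_lie (ι hs) (ι es) (Φh (m-2)) 2 ((m-2 : ℤ):ℂ) hHE (hcomph (m-2)).2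
      rw [lie_add, lie_smul, h1, h2]
      push_cast
      module
    have hsupp1 : (Function.support (fun m : ℤ => (((r:ℂ)+2) - (m:ℂ)) • Φe m)).Finite := by
      apply hfine.subset
      intro m hm
      rw [Function.mem_support] at *
      intro h0; apply hm; rw [h0, smul_zero]
    have hsupp2 : (Function.support (fun m : ℤ => ⁅ι es, Φh (m-2)⁆)).Finite := by
      apply Set.Finite.subset (hfinh.image (fun l => l + 2))
      intro m hm
      rw [Function.mem_support] at hm
      refine ⟨m-2, ?_, by ring⟩
      rw [Function.mem_support]
      intro h0; apply hm; rw [h0, lie_zero]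
    have hfinχ : (Function.support (fun m : ℤ =>
        (((r:ℂ)+2) - (m:ℂ)) • Φe m + ⁅ι es, Φh (m-2)⁆)).Finite := by
      apply Set.Finite.subset (hsupp1.union hsupp2)
      intro m hm
      rw [Function.mem_support] at hm
      by_contra hcon
      simp only [Set.mem_union, Function.mem_support, not_or, not_not] at hcon
      apply hm
      rw [hcon.1, hcon.2, add_zero]
    have hsum0 : ∑ᶠ m : ℤ, ((((r:ℂ)+2) - (m:ℂ)) • Φe m + ⁅ι es, Φh (m-2)⁆) = 0 := by
      rw [finsum_add_distrib hsupp1 hsupp2]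
      have p2 : ∑ᶠ m : ℤ, ⁅ι es, Φh (m-2)⁆ = ⁅ι es, Φ hs⁆ := by
        rw [hsumh, adE]
        exact finsum_comp_equiv (Equiv.subRight (2:ℤ)) (f := fun l : ℤ => ⁅ι es, Φh l⁆)
      have hsuppa : (Function.support (fun m : ℤ => ((r:ℂ)+2) • Φe m)).Finite := by
        apply hfine.subset
        intro m hm
        rw [Function.mem_support] at *
        intro h0; apply hm; rw [h0, smul_zero]
      have hsuppb : (Function.support (fun m : ℤ => (m:ℂ) • Φe m)).Finite := by
        apply hfine.subset
        intro m hm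
        rw [Function.mem_support] at *
        intro h0; apply hm; rw [h0, smul_zero]
      have p1 : ∑ᶠ m : ℤ, (((r:ℂ)+2) - (m:ℂ)) • Φe m =
          ((r:ℂ)+2) • Φ es - ⁅ι hs, Φ es⁆ := by
        have hsplit : (fun m : ℤ => (((r:ℂ)+2) - (m:ℂ)) • Φe m) =
            fun m : ℤ => ((r:ℂ)+2) • Φe m - (m:ℂ) • Φe m := by
          funext m; rw [sub_smul]
        rw [hsplit, finsum_sub_distrib hsuppa hsuppb]
        congr 1
        · rw [hsume, smul_finsum' _ hfine]
        · rw [hsume, adHe]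
          exact (finsum_congr fun m => (hcompe m).2).symm
      rw [p1, p2]
      linear_combination (norm := module) E2
    have hzero := eigsum_zero (ι hs) _ hfinχ hwtχ hsum0
    intro l
    have := hzero (l+2)
    have hl2 : ((l:ℤ) + 2 - 2 : ℤ) = l := by ring
    rw [hl2] at this
    push_cast at this
    linear_combination (norm := module) this
  -- component relation B
  have relB : ∀ l : ℤ, ((r:ℂ) + (l:ℂ)) • Φf (l-2) = ⁅ι fs, Φh l⁆ := by
    have hwtχ : ∀ m : ℤ, ⁅ι hs, (((r:ℂ)+2) + (m:ℂ)) • Φf m - ⁅ι fs, Φh (m+2)⁆⁆ =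
        (m:ℂ) • ((((r:ℂ)+2) + (m:ℂ)) • Φf m - ⁅ι fs, Φh (m+2)⁆) := by
      intro m
      have h1 := (hcompf m).2
      have h2 := wt_lie (ι hs) (ι fs) (Φh (m+2)) (-2) ((m+2 : ℤ):ℂ) hHF (hcomph (m+2)).2
      rw [lie_sub, lie_smul, h1, h2]
      push_cast
      module
    have hsupp1 : (Function.support (fun m : ℤ => (((r:ℂ)+2) + (m:ℂ)) • Φf m)).Finite := by
      apply hfinf.subset
      intro m hm
      rw [Function.mem_support] at *
      intro h0; apply hm; rw [h0, smul_zero]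
    have hsupp2 : (Function.support (fun m : ℤ => ⁅ι fs, Φh (m+2)⁆)).Finite := by
      apply Set.Finite.subset (hfinh.image (fun l => l - 2))
      intro m hm
      rw [Function.mem_support] at hm
      refine ⟨m+2, ?_, by ring⟩
      rw [Function.mem_support]
      intro h0; apply hm; rw [h0, lie_zero]
    have hfinχ : (Function.support (fun m : ℤ =>
        (((r:ℂ)+2) + (m:ℂ)) • Φf m - ⁅ι fs, Φh (m+2)⁆)).Finite := by
      apply Set.Finite.subset (hsupp1.union hsupp2)
      intro m hm
      rw [Function.mem_support] at hm
      by_contra hcon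
      simp only [Set.mem_union, Function.mem_support, not_or, not_not] at hcon
      apply hm
      rw [hcon.1, hcon.2, sub_zero]
    have hsum0 : ∑ᶠ m : ℤ, ((((r:ℂ)+2) + (m:ℂ)) • Φf m - ⁅ι fs, Φh (m+2)⁆) = 0 := by
      rw [finsum_sub_distrib hsupp1 hsupp2]
      have p2 : ∑ᶠ m : ℤ, ⁅ι fs, Φh (m+2)⁆ = ⁅ι fs, Φ hs⁆ := by
        rw [hsumh, adF]
        exact finsum_comp_equiv (Equiv.addRight (2:ℤ)) (f := fun l : ℤ => ⁅ι fs, Φh l⁆)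
      have hsuppa : (Function.support (fun m : ℤ => ((r:ℂ)+2) • Φf m)).Finite := by
        apply hfinf.subset
        intro m hm
        rw [Function.mem_support] at *
        intro h0; apply hm; rw [h0, smul_zero]
      have hsuppb : (Function.support (fun m : ℤ => (m:ℂ) • Φf m)).Finite := by
        apply hfinf.subset
        intro m hm
        rw [Function.mem_support] at *
        intro h0; apply hm; rw [h0, smul_zero]
      have p1 : ∑ᶠ m : ℤ, (((r:ℂ)+2) + (m:ℂ)) • Φf m =
          ((r:ℂ)+2) • Φ fs + ⁅ι hs, Φ fs⁆ := by
        have hsplit : (fun m : ℤ => (((r:ℂ)+2) + (m:ℂ)) • Φf m) =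
            fun m : ℤ => ((r:ℂ)+2) • Φf m + (m:ℂ) • Φf m := by
          funext m; rw [add_smul]
        rw [hsplit, finsum_add_distrib hsuppa hsuppb]
        congr 1
        · rw [hsumf, smul_finsum' _ hfinf]
        · rw [hsumf, adHf]
          exact (finsum_congr fun m => (hcompf m).2).symm
      rw [p1, p2]
      linear_combination (norm := module) E3
    have hzero := eigsum_zero (ι hs) _ hfinχ hwtχ hsum0
    intro l
    have := hzero (l-2)
    have hl2 : ((l:ℤ) - 2 + 2 : ℤ) = l := by ring
    rw [hl2] at this
    push_cast at this
    linear_combination (norm := module) this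
  -- component relation C
  have relC : ∀ m : ℤ, ((r:ℂ)+2) • Φh m =
      (2:ℂ) • ⁅ι es, Φf (m-2)⁆ - (2:ℂ) • ⁅ι fs, Φe (m+2)⁆ := by
    have hwtχ : ∀ m : ℤ, ⁅ι hs, ((r:ℂ)+2) • Φh m -
        ((2:ℂ) • ⁅ι es, Φf (m-2)⁆ - (2:ℂ) • ⁅ι fs, Φe (m+2)⁆)⁆ =
        (m:ℂ) • (((r:ℂ)+2) • Φh m -
        ((2:ℂ) • ⁅ι es, Φf (m-2)⁆ - (2:ℂ) • ⁅ι fs, Φe (m+2)⁆)) := by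
      intro m
      have h1 := (hcomph m).2
      have h2 := wt_lie (ι hs) (ι es) (Φf (m-2)) 2 ((m-2 : ℤ):ℂ) hHE (hcompf (m-2)).2
      have h3 := wt_lie (ι hs) (ι fs) (Φe (m+2)) (-2) ((m+2 : ℤ):ℂ) hHF (hcompe (m+2)).2
      rw [lie_sub, lie_sub, lie_smul, lie_smul, lie_smul, h1, h2, h3]
      push_cast
      module
    have hsupp1 : (Function.support (fun m : ℤ => ((r:ℂ)+2) • Φh m)).Finite := by
      apply hfinh.subset
      intro m hm
      rw [Function.mem_support] at *
      intro h0; apply hm; rw [h0, smul_zero]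
    have hsuppa : (Function.support (fun m : ℤ => (2:ℂ) • ⁅ι es, Φf (m-2)⁆)).Finite := by
      apply Set.Finite.subset (hfinf.image (fun l => l + 2))
      intro m hm
      rw [Function.mem_support] at hm
      refine ⟨m-2, ?_, by ring⟩
      rw [Function.mem_support]
      intro h0; apply hm; rw [h0, lie_zero, smul_zero]
    have hsuppb : (Function.support (fun m : ℤ => (2:ℂ) • ⁅ι fs, Φe (m+2)⁆)).Finite := by
      apply Set.Finite.subset (hfine.image (fun l => l - 2))
      intro m hm
      rw [Function.mem_support] at hm
      refine ⟨m+2, ?_, by ring⟩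
      rw [Function.mem_support]
      intro h0; apply hm; rw [h0, lie_zero, smul_zero]
    have hsupp2 : (Function.support (fun m : ℤ =>
        (2:ℂ) • ⁅ι es, Φf (m-2)⁆ - (2:ℂ) • ⁅ι fs, Φe (m+2)⁆)).Finite := by
      apply Set.Finite.subset (hsuppa.union hsuppb)
      intro m hm
      rw [Function.mem_support] at hm
      by_contra hcon
      simp only [Set.mem_union, Function.mem_support, not_or, not_not] at hcon
      apply hm
      rw [hcon.1, hcon.2, sub_zero]
    have hfinχ : (Function.support (fun m : ℤ => ((r:ℂ)+2) • Φh m -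
        ((2:ℂ) • ⁅ι es, Φf (m-2)⁆ - (2:ℂ) • ⁅ι fs, Φe (m+2)⁆))).Finite := by
      apply Set.Finite.subset (hsupp1.union hsupp2)
      intro m hm
      rw [Function.mem_support] at hm
      by_contra hcon
      simp only [Set.mem_union, Function.mem_support, not_or, not_not] at hcon
      apply hm
      rw [hcon.1, hcon.2, sub_zero]
    have hsum0 : ∑ᶠ m : ℤ, (((r:ℂ)+2) • Φh m -
        ((2:ℂ) • ⁅ι es, Φf (m-2)⁆ - (2:ℂ) • ⁅ι fs, Φe (m+2)⁆)) = 0 := by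
      rw [finsum_sub_distrib hsupp1 hsupp2, finsum_sub_distrib hsuppa hsuppb]
      have p1 : ∑ᶠ m : ℤ, ((r:ℂ)+2) • Φh m = ((r:ℂ)+2) • Φ hs := by
        rw [hsumh, smul_finsum' _ hfinh]
      have hsuppc : (Function.support (fun m : ℤ => ⁅ι es, Φf (m-2)⁆)).Finite := by
        apply Set.Finite.subset (hfinf.image (fun l => l + 2))
        intro m hm
        rw [Function.mem_support] at hm
        refine ⟨m-2, ?_, by ring⟩
        rw [Function.mem_support]
        intro h0; apply hm; rw [h0, lie_zero]
      have hsuppd : (Function.support (fun m : ℤ => ⁅ι fs, Φe (m+2)⁆)).Finite := by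
        apply Set.Finite.subset (hfine.image (fun l => l - 2))
        intro m hm
        rw [Function.mem_support] at hm
        refine ⟨m+2, ?_, by ring⟩
        rw [Function.mem_support]
        intro h0; apply hm; rw [h0, lie_zero]
      have p2 : ∑ᶠ m : ℤ, (2:ℂ) • ⁅ι es, Φf (m-2)⁆ = (2:ℂ) • ⁅ι es, Φ fs⁆ := by
        rw [← smul_finsum' (2:ℂ) hsuppc]
        congr 1
        rw [hsumf, adEf]
        exact finsum_comp_equiv (Equiv.subRight (2:ℤ)) (f := fun l : ℤ => ⁅ι es, Φf l⁆)
      have p3 : ∑ᶠ m : ℤ, (2:ℂ) • ⁅ι fs, Φe (m+2)⁆ = (2:ℂ) • ⁅ι fs, Φ es⁆ := by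
        rw [← smul_finsum' (2:ℂ) hsuppd]
        congr 1
        rw [hsume, adFe]
        exact finsum_comp_equiv (Equiv.addRight (2:ℤ)) (f := fun l : ℤ => ⁅ι fs, Φe l⁆)
      rw [p1, p2, p3]
      linear_combination (norm := module) E1
    have hzero := eigsum_zero (ι hs) _ hfinχ hwtχ hsum0
    intro m
    have := hzero m
    linear_combination (norm := module) this
  -- vanishing of out-of-range components
  have hvanE : ∀ l : ℤ, ((r:ℤ) < l ∨ l < -(r:ℤ)) → Φe l = 0 := fun l hl =>
    vanish_of_abs_gt (ι es) (ι fs) (ι hs) hHE hHF hEFg r (Φe l) (hcompe l).1 l (hcompe l).2 hl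
  have hvanF : ∀ l : ℤ, ((r:ℤ) < l ∨ l < -(r:ℤ)) → Φf l = 0 := fun l hl =>
    vanish_of_abs_gt (ι es) (ι fs) (ι hs) hHE hHF hEFg r (Φf l) (hcompf l).1 l (hcompf l).2 hl
  -- goal 1 : Φh r = 0
  have goal1 : Φh (r:ℤ) = 0 := by
    have hErp2 : Φe ((r:ℤ)+2) = 0 := hvanE _ (Or.inl (by omega))
    rcases Nat.eq_zero_or_pos r with hr | hr
    · subst hr
      have h1 : Φf ((0:ℤ)-2) = 0 := hvanF _ (Or.inr (by omega))
      have h2 : Φe ((0:ℤ)+2) = 0 := hvanE _ (Or.inl (by omega))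
      have hC := relC (0:ℤ)
      simp only [h1, h2, lie_zero, smul_zero, sub_zero] at hC
      have hne : ((0:ℕ):ℂ) + 2 ≠ 0 := by norm_num
      have h0 : Φh (0:ℤ) = 0 := (smul_eq_zero.mp hC).resolve_left hne
      simpa using h0
    · have hCr := relC (r:ℤ)
      rw [hErp2, lie_zero, smul_zero, sub_zero] at hCr
      have hBr := relB (r:ℤ)
      have hB' := congrArg (fun z => ⁅ι es, z⁆) hBr
      simp only [lie_smul] at hB'
      push_cast at hB'
      have hEF4 := (ef_fe_formula (ι es) (ι fs) (ι hs) hEFg (r:ℂ) (((r:ℤ)):ℂ)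
        (Φh (r:ℤ)) (hcomph (r:ℤ)).1 (hcomph (r:ℤ)).2).1
      push_cast at hEF4
      have key : ((2*(r:ℂ))*((r:ℂ)+1)) • Φh (r:ℤ) = 0 := by
        linear_combination (norm := module) (2*(r:ℂ)) • hCr + (2:ℂ) • hB' + (1/2:ℂ) • hEF4
      have hne : (2*(r:ℂ))*((r:ℂ)+1) ≠ 0 := by
        have h1 : (r:ℂ) ≠ 0 := Nat.cast_ne_zero.mpr (by omega)
        have h2 : (r:ℂ) + 1 ≠ 0 := by
          have : ((r+1 : ℕ):ℂ) ≠ 0 := Nat.cast_ne_zero.mpr (by omega)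
          push_cast at this
          exact this
        exact mul_ne_zero (mul_ne_zero two_ne_zero h1) h2
      exact (smul_eq_zero.mp key).resolve_left hne
  -- goal 2 : Φh (-r) = 0
  have goal2 : Φh (-(r:ℤ)) = 0 := by
    rcases Nat.eq_zero_or_pos r with hr | hr
    · subst hr
      rw [show (-((0:ℕ):ℤ)) = (((0:ℕ):ℤ)) by norm_num]
      exact goal1
    · have hFm : Φf (-(r:ℤ)-2) = 0 := hvanF _ (Or.inr (by omega))
      have hCm := relC (-(r:ℤ))
      rw [hFm, lie_zero, smul_zero, zero_sub] at hCm
      have hAm := relA (-(r:ℤ))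
      have hA2 := congrArg (fun z => ⁅ι fs, z⁆) hAm
      simp only [lie_smul, lie_neg] at hA2
      push_cast at hA2
      have hEF4 := (ef_fe_formula (ι es) (ι fs) (ι hs) hEFg (r:ℂ) (Int.cast (-(r:ℤ)) : ℂ)
        (Φh (-(r:ℤ))) (hcomph (-(r:ℤ))).1 (hcomph (-(r:ℤ))).2).2
      push_cast at hEF4
      have key : ((2*(r:ℂ))*((r:ℂ)+1)) • Φh (-(r:ℤ)) = 0 := by
        linear_combination (norm := module) (2*(r:ℂ)) • hCm - (2:ℂ) • hA2 + (1/2:ℂ) • hEF4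
      have hne : (2*(r:ℂ))*((r:ℂ)+1) ≠ 0 := by
        have h1 : (r:ℂ) ≠ 0 := Nat.cast_ne_zero.mpr (by omega)
        have h2 : (r:ℂ) + 1 ≠ 0 := by
          have : ((r+1 : ℕ):ℂ) ≠ 0 := Nat.cast_ne_zero.mpr (by omega)
          push_cast at this
          exact this
        exact mul_ne_zero (mul_ne_zero two_ne_zero h1) h2
      exact (smul_eq_zero.mp key).resolve_left hne
  refine ⟨goal1, goal2, ?_, ?_⟩
  · intro l
    by_cases hc : ((r:ℂ) - (l:ℂ)) = 0
    · have hlr : l = (r:ℤ) := by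
        have h1 : (l:ℂ) = ((r:ℕ):ℂ) := by linear_combination -hc
        exact_mod_cast h1
      subst hlr
      rw [hc, inv_zero, neg_zero, zero_smul]
      exact hvanE _ (Or.inl (by omega))
    · have hA := relA l
      calc Φe (l+2) = ((r:ℂ)-(l:ℂ))⁻¹ • (((r:ℂ)-(l:ℂ)) • Φe (l+2)) :=
            (inv_smul_smul₀ hc _).symm
        _ = ((r:ℂ)-(l:ℂ))⁻¹ • (-⁅ι es, Φh l⁆) := by rw [hA]
        _ = (-((r:ℂ)-(l:ℂ))⁻¹) • ⁅ι es, Φh l⁆ := by module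
  · intro l
    by_cases hc : ((r:ℂ) + (l:ℂ)) = 0
    · have hlr : l = -(r:ℤ) := by
        have h1 : (l:ℂ) = -((r:ℕ):ℂ) := by linear_combination hc
        exact_mod_cast h1
      subst hlr
      rw [hc, inv_zero, zero_smul]
      exact hvanF _ (Or.inr (by omega))
    · have hB := relB l
      calc Φf (l-2) = ((r:ℂ)+(l:ℂ))⁻¹ • (((r:ℂ)+(l:ℂ)) • Φf (l-2)) :=
            (inv_smul_smul₀ hc _).symm
        _ = ((r:ℂ)+(l:ℂ))⁻¹ • ⁅ι fs, Φh l⁆ := by rw [hB]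
end
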